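/- Let X be a matching contained in a path L on the real line, and let I be a subinterval of L (a set of consecutive edges of L). Then there exists an X-alternating path P in the complete graph on the vertices such that c(P ∩ X) = c(X ∩ I) and c(P \ X) = c(I \ X). -/

import Mathlib

open scoped Classical

/-- The list of edges of the path visiting the vertices of `l` in order. -/
def edgeList {V : Type*} (l : List V) : List (Sym2 V) :=
  l.zipWith (fun a b => s(a, b)) l.tail

/-- The cost of an edge of points of the real line: the distance between its endpoints. -/
noncomputable def edgeCost (e : Sym2 ℝ) : ℝ :=
  Sym2.lift ⟨fun a b => |a - b|, fun a b => abs_sub_comm a b⟩ e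

/-- The total cost of a finite set of edges. -/
noncomputable def setCost (S : Finset (Sym2 ℝ)) : ℝ := ∑ e ∈ S, edgeCost e

/-- A list of edges is `M`-alternating if consecutive edges alternate between membership
and non-membership in `M`. -/
def IsAlt (M : Set (Sym2 ℝ)) (es : List (Sym2 ℝ)) : Prop :=
  ∀ (i : ℕ) (h : i + 1 < es.length),
    (es[i]'(Nat.lt_of_succ_lt h) ∈ M ↔ es[i + 1]'h ∉ M)

lemma edgeList_nil {V : Type*} : edgeList ([] : List V) = [] := rfl
lemma edgeList_single {V : Type*} (a : V) : edgeList [a] = [] := rfl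
lemma edgeList_cons_cons {V : Type*} (a b : V) (t : List V) :
    edgeList (a :: b :: t) = s(a, b) :: edgeList (b :: t) := rfl

lemma mem_of_mem_edgeList {V : Type*} : ∀ {p : List V} {e : Sym2 V}, e ∈ edgeList p →
    ∀ z ∈ e, z ∈ p
  | [], e, he => by simp [edgeList_nil] at he
  | [a], e, he => by simp [edgeList_single] at he
  | a :: b :: t, e, he => by
    rw [edgeList_cons_cons, List.mem_cons] at he
    intro z hz
    rcases he with rfl | he
    · rcases Sym2.mem_iff.mp hz with rfl | rfl <;> simp
    · have := mem_of_mem_edgeList he z hz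
      simp only [List.mem_cons] at this ⊢
      tauto

lemma subset_edgeList_cons {V : Type*} (a : V) (t : List V) :
    edgeList t ⊆ edgeList (a :: t) := by
  cases t with
  | nil => simp [edgeList_nil]
  | cons b u => rw [edgeList_cons_cons]; exact List.subset_cons_self _ _

lemma edgeCost_mk {a b : ℝ} (h : a ≤ b) : edgeCost s(a, b) = b - a := by
  simp only [edgeCost, Sym2.lift_mk]
  rw [abs_sub_comm, abs_of_nonneg (by linarith)]

lemma sum_edgeCost : ∀ {p : List ℝ}, p.Chain' (· < ·) →
    ((edgeList p).map edgeCost).sum = p.getLast?.getD 0 - p.head?.getD 0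
  | [], _ => by simp [edgeList_nil]
  | [a], _ => by simp [edgeList_single]
  | a :: b :: t, h => by
    have hab : a < b := (List.isChain_cons_cons.mp h).1
    have ih := sum_edgeCost (List.isChain_cons_cons.mp h).2
    rw [edgeList_cons_cons, List.map_cons, List.sum_cons, ih, edgeCost_mk hab.le,
      List.getLast?_cons_cons]
    simp

lemma nodup_edgeList : ∀ {p : List ℝ}, p.Chain' (· < ·) → (edgeList p).Nodup
  | [], _ => by simp [edgeList_nil]
  | [a], _ => by simp [edgeList_single]
  | a :: b :: t, h => by
    have hp : (a :: b :: t).Pairwise (· < ·) := List.isChain_iff_pairwise.mp h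
    have h2 := (List.isChain_cons_cons.mp h).2
    rw [edgeList_cons_cons]
    refine List.nodup_cons.mpr ⟨?_, nodup_edgeList h2⟩
    intro hmem
    have ha : a ∈ (b :: t) := mem_of_mem_edgeList hmem a (by simp)
    have : a < a := (List.pairwise_cons.mp hp).1 a ha
    exact lt_irrefl a this

lemma Q_prefix : ∀ {l m : List ℝ}, l.Pairwise (· < ·) → m <+: l → ∀ {e : Sym2 ℝ},
    e ∈ edgeList l → (∀ z ∈ e, z ∈ m) → e ∈ edgeList m
  | [], m, _, _, e, he, _ => by simp [edgeList_nil] at he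
  | [a], m, _, _, e, he, _ => by simp [edgeList_single] at he
  | a :: b :: t, m, hp, hm, e, he, hz => by
    rw [edgeList_cons_cons, List.mem_cons] at he
    have hlt : ∀ y ∈ b :: t, a < y := (List.pairwise_cons.mp hp).1
    rcases m with _ | ⟨c, m'⟩
    · exact absurd (hz _ (Sym2.out_fst_mem e)) (List.not_mem_nil)
    · obtain ⟨rfl, hm'⟩ := List.cons_prefix_cons.mp hm
      rcases he with rfl | he
      · have hb : b ∈ c :: m' := hz b (by simp)
        have hba : b ≠ c := ne_of_gt (hlt b (by simp))
        have hb' : b ∈ m' := (List.mem_cons.mp hb).resolve_left hba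
        rcases m' with _ | ⟨d, m''⟩
        · simp at hb'
        · obtain ⟨rfl, _⟩ := List.cons_prefix_cons.mp hm'
          rw [edgeList_cons_cons]
          exact List.mem_cons_self
      · have hend : ∀ z ∈ e, z ∈ m' := by
          intro z hzz
          have hzl : z ∈ b :: t := mem_of_mem_edgeList he z hzz
          have hza : z ≠ c := fun h => absurd (hlt z hzl) (by simp [h])
          exact (List.mem_cons.mp (hz z hzz)).resolve_left hza
        exact subset_edgeList_cons c m'
          (Q_prefix (List.pairwise_cons.mp hp).2 hm' he hend)

lemma Q_infix : ∀ {l m : List ℝ}, l.Pairwise (· < ·) → m <:+: l → ∀ {e : Sym2 ℝ},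
    e ∈ edgeList l → (∀ z ∈ e, z ∈ m) → e ∈ edgeList m
  | [], m, _, _, e, he, _ => by simp [edgeList_nil] at he
  | a :: l', m, hp, hm, e, he, hz => by
    rcases List.infix_cons_iff.mp hm with hm | hm
    · exact Q_prefix hp hm he hz
    · rcases l' with _ | ⟨b, t⟩
      · simp [edgeList_single] at he
      · rw [edgeList_cons_cons, List.mem_cons] at he
        have hlt : ∀ y ∈ b :: t, a < y := (List.pairwise_cons.mp hp).1
        rcases he with rfl | he
        · have : a ∈ m := hz a (by simp)
          have : a ∈ b :: t := hm.subset this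
          exact absurd (hlt a this) (lt_irrefl a)
        · exact Q_infix (List.pairwise_cons.mp hp).2 hm he hz

lemma edgeList_drop {V : Type*} : ∀ (l : List V) (n : ℕ),
    edgeList (l.drop n) = (edgeList l).drop n
  | l, 0 => by simp
  | [], n + 1 => by simp [edgeList]
  | [a], n + 1 => by simp [edgeList]
  | a :: b :: t, n + 1 => by
    show edgeList ((b :: t).drop n) = (s(a,b) :: edgeList (b :: t)).drop (n+1)
    rw [List.drop_succ_cons, edgeList_drop (b :: t) n]

lemma edgeList_take {V : Type*} : ∀ (l : List V) (n : ℕ),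
    edgeList (l.take (n + 1)) = (edgeList l).take n
  | [], n => by simp [edgeList]
  | [a], n => by simp [edgeList]
  | a :: b :: t, 0 => by simp [edgeList]
  | a :: b :: t, n + 1 => by
    show s(a,b) :: edgeList (b :: t.take n) = (s(a,b) :: edgeList (b :: t)).take (n+1)
    rw [List.take_succ_cons]
    rw [show (b : V) :: t.take n = (b :: t).take (n+1) from rfl, edgeList_take (b :: t) n]

lemma exists_infix_of_infix_edgeList {l : List ℝ} {I : List (Sym2 ℝ)}
    (h : I <:+: edgeList l) : ∃ m, m <:+: l ∧ edgeList m = I := by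
  obtain ⟨t, hpre, hsuf⟩ := List.infix_iff_prefix_suffix.mp h
  have hdrop := List.suffix_iff_eq_drop.mp hsuf
  set k := (edgeList l).length - t.length with hk
  have hIt : I = t.take I.length := List.prefix_iff_eq_take.mp hpre
  refine ⟨(l.drop k).take (I.length + 1), ?_, ?_⟩
  · exact ((l.drop k).take_prefix _).isInfix.trans (l.drop_suffix k).isInfix
  · rw [edgeList_take, edgeList_drop, ← hdrop, ← hIt]

noncomputable def collapse (X : Finset (Sym2 ℝ)) : ℝ → ℝ → List ℝ → List ℝ
  | L, c, [] => if L = c then [c] else [L, c]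
  | L, c, x :: xs =>
    if s(c, x) ∈ X then (if L = c then [c] else [L, c]) ++ collapse X x x xs
    else collapse X L x xs

lemma collapse_spec (X : Finset (Sym2 ℝ))
    (hmatch : ∀ e ∈ X, ∀ f ∈ X, e ≠ f → ∀ x : ℝ, x ∈ e → x ∉ f) :
    ∀ (xs : List ℝ) (L c : ℝ), (c :: xs).Chain' (· < ·) → L ≤ c →
    (∀ a b : ℝ, a ∈ c :: xs → b ∈ c :: xs → s(a, b) ∈ X → s(a, b) ∈ edgeList (c :: xs)) →
    (L = c ∨ (s(L, c) ∉ X ∧ ∀ y ∈ xs, s(L, y) ∉ X)) →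
    collapse X L c xs ≠ [] ∧
    (collapse X L c xs).head? = some L ∧
    (collapse X L c xs).getLast? = (c :: xs).getLast? ∧
    (collapse X L c xs).Chain' (· < ·) ∧
    (edgeList (collapse X L c xs)).Chain' (fun e f => e ∈ X ↔ f ∉ X) ∧
    (∀ e ∈ (edgeList (collapse X L c xs)).head?, e ∈ X →
       L = c ∧ ∃ x' xs', xs = x' :: xs' ∧ e = s(c, x')) ∧
    (edgeList (collapse X L c xs)).filter (· ∈ X)
      = (edgeList (c :: xs)).filter (· ∈ X) := by
  intro xs
  induction xs with
  | nil =>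
    intro L c hch hLc hQ hinv
    by_cases hLeq : L = c
    · subst hLeq
      have hgeq : collapse X L L [] = [L] := by simp [collapse]
      rw [hgeq]
      exact ⟨by simp, by simp, by simp, by simp [List.Chain'], by simp [edgeList_single, List.Chain'],
        by simp [edgeList_single], by simp [edgeList_single]⟩
    · have hnX : s(L, c) ∉ X := (hinv.resolve_left hLeq).1
      have hlt : L < c := lt_of_le_of_ne hLc hLeq
      have hgeq : collapse X L c [] = [L, c] := by simp [collapse, hLeq]
      rw [hgeq]
      refine ⟨by simp, by simp, by simp, by simp [hlt, List.Chain'], ?_, ?_, ?_⟩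
      · rw [show edgeList [L, c] = [s(L, c)] from rfl]
        simp [List.Chain']
      · intro e he heX
        rw [show edgeList [L, c] = [s(L, c)] from rfl] at he
        simp only [List.head?_cons, Option.mem_def, Option.some.injEq] at he
        subst he
        exact absurd heX hnX
      · rw [show edgeList [L, c] = [s(L, c)] from rfl]
        simp [edgeList_single, List.filter_cons, hnX]
  | cons x xs ih =>
    intro L c hch hLc hQ hinv
    have hP : (c :: x :: xs).Pairwise (· < ·) := List.isChain_iff_pairwise.mp hch
    have hcall : ∀ y ∈ x :: xs, c < y := (List.pairwise_cons.mp hP).1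
    have hcx : c < x := hcall x (by simp)
    have hxall : ∀ y ∈ xs, x < y :=
      (List.pairwise_cons.mp (List.pairwise_cons.mp hP).2).1
    have hch' : (x :: xs).Chain' (· < ·) := hch.tail
    have hQ' : ∀ a b : ℝ, a ∈ x :: xs → b ∈ x :: xs → s(a, b) ∈ X →
        s(a, b) ∈ edgeList (x :: xs) := by
      intro a b ha hb hXab
      have hmem := hQ a b (List.mem_cons_of_mem c ha) (List.mem_cons_of_mem c hb) hXab
      rw [edgeList_cons_cons, List.mem_cons] at hmem
      rcases hmem with heq | hmem
      · exfalso
        have hc : c ∈ s(a, b) := by rw [heq]; simp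
        rcases Sym2.mem_iff.mp hc with rfl | rfl
        · exact absurd (hcall _ ha) (lt_irrefl c)
        · exact absurd (hcall _ hb) (lt_irrefl c)
      · exact hmem
    by_cases hX : s(c, x) ∈ X
    · -- the next edge is a matching edge
      obtain ⟨hne', hhead', hlast', hchain', halt', hclass', hfilt'⟩ :=
        ih x x hch' le_rfl hQ' (Or.inl rfl)
      obtain ⟨t, hgt⟩ : ∃ t, collapse X x x xs = x :: t := by
        cases hg' : collapse X x x xs with
        | nil => exact absurd hg' hne'
        | cons y t =>
          rw [hg'] at hhead'
          simp only [List.head?_cons, Option.some.injEq] at hhead'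
          exact ⟨t, by rw [hhead']⟩
      rw [hgt] at hlast' hchain' halt' hclass' hfilt'
      have hnext : ∀ e ∈ (edgeList (x :: t)).head?, e ∉ X := by
        intro e he heX
        obtain ⟨-, x', xs', hxsEq, rfl⟩ := hclass' e he heX
        have hx'x : x < x' := hxall x' (hxsEq ▸ List.mem_cons_self (a := x') (l := xs'))
        have hne : s(x, x') ≠ s(c, x) := by
          intro h
          rcases Sym2.eq_iff.mp h with ⟨h1, h2⟩ | ⟨h1, h2⟩ <;> linarith
        exact hmatch _ heX _ hX hne x (by simp) (by simp)
      have halt2 : (edgeList (c :: x :: t)).Chain' (fun e f => e ∈ X ↔ f ∉ X) := by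
        rw [edgeList_cons_cons]
        refine List.isChain_cons.mpr ⟨?_, halt'⟩
        intro e' he'
        exact ⟨fun _ => hnext e' he', fun _ => hX⟩
      have hfilt2 : (edgeList (c :: x :: t)).filter (· ∈ X)
          = (edgeList (c :: x :: xs)).filter (· ∈ X) := by
        rw [edgeList_cons_cons, edgeList_cons_cons]
        simp only [List.filter_cons]
        rw [hfilt']
      by_cases hLeq : L = c
      · subst hLeq
        have hgeq : collapse X L L (x :: xs) = L :: x :: t := by
          simp [collapse, hX, hgt]
        rw [hgeq]
        refine ⟨by simp, by simp, ?_, ?_, halt2, ?_, hfilt2⟩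
        · rw [List.getLast?_cons_cons, List.getLast?_cons_cons]
          exact hlast'
        · exact List.isChain_cons_cons.mpr ⟨hcx, hchain'⟩
        · intro e he heX
          rw [edgeList_cons_cons, List.head?_cons] at he
          rw [Option.mem_def, Option.some.injEq] at he
          subst he
          exact ⟨rfl, x, xs, rfl, rfl⟩
      · obtain ⟨hnLc, -⟩ := hinv.resolve_left hLeq
        have hLlt : L < c := lt_of_le_of_ne hLc hLeq
        have hgeq : collapse X L c (x :: xs) = L :: c :: x :: t := by
          simp [collapse, hX, hgt, hLeq]
        rw [hgeq]
        refine ⟨by simp, by simp, ?_, ?_, ?_, ?_, ?_⟩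
        · rw [List.getLast?_cons_cons, List.getLast?_cons_cons, List.getLast?_cons_cons]
          exact hlast'
        · exact List.isChain_cons_cons.mpr ⟨hLlt, List.isChain_cons_cons.mpr ⟨hcx, hchain'⟩⟩
        · rw [edgeList_cons_cons]
          refine List.isChain_cons.mpr ⟨?_, halt2⟩
          intro e' he'
          rw [edgeList_cons_cons, List.head?_cons, Option.mem_def, Option.some.injEq] at he'
          subst he'
          exact ⟨fun h => absurd h hnLc, fun hnn => absurd hX hnn⟩
        · intro e he heX
          rw [edgeList_cons_cons, List.head?_cons, Option.mem_def, Option.some.injEq] at he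
          subst he
          exact absurd heX hnLc
        · rw [edgeList_cons_cons, List.filter_cons, if_neg (by simpa using hnLc)]
          exact hfilt2
    · -- the next edge is not a matching edge
      have hLx : L ≤ x := hLc.trans hcx.le
      have hinv' : s(L, x) ∉ X ∧ ∀ y ∈ xs, s(L, y) ∉ X := by
        rcases hinv with h | ⟨hnLc, hall⟩
        · subst h
          refine ⟨hX, ?_⟩
          intro y hy hXy
          have hmem := hQ L y List.mem_cons_self
            (List.mem_cons_of_mem _ (List.mem_cons_of_mem _ hy)) hXy
          rw [edgeList_cons_cons, List.mem_cons] at hmem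
          rcases hmem with heq | hmem
          · rcases Sym2.eq_iff.mp heq with ⟨h1, h2⟩ | ⟨h1, h2⟩
            · exact absurd (hxall y hy) (by rw [h2]; exact lt_irrefl x)
            · exact absurd hcx (by rw [h1]; exact lt_irrefl x)
          · have : L ∈ x :: xs := mem_of_mem_edgeList hmem L (by simp)
            exact absurd (hcall L this) (lt_irrefl L)
        · exact ⟨hall x (List.mem_cons_self (a := x) (l := xs)), fun y hy =>
            hall y (List.mem_cons_of_mem x hy)⟩
      obtain ⟨hne', hhead', hlast', hchain', halt', hclass', hfilt'⟩ :=
        ih L x hch' hLx hQ' (Or.inr hinv')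
      have hgeq : collapse X L c (x :: xs) = collapse X L x xs := by
        simp [collapse, hX]
      rw [hgeq]
      refine ⟨hne', hhead', ?_, hchain', halt', ?_, ?_⟩
      · rw [List.getLast?_cons_cons]
        exact hlast'
      · intro e he heX
        obtain ⟨hLeqx, -⟩ := hclass' e he heX
        exact absurd hLeqx (ne_of_lt (lt_of_le_of_lt hLc hcx))
      · rw [hfilt', edgeList_cons_cons, List.filter_cons, if_neg (by simpa using hX)]

lemma toFinset_inter (es : List (Sym2 ℝ)) (X : Finset (Sym2 ℝ)) :
    es.toFinset ∩ X = (es.filter (· ∈ X)).toFinset := by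
  ext e; simp [List.mem_filter, and_comm]

lemma toFinset_sdiff (es : List (Sym2 ℝ)) (X : Finset (Sym2 ℝ)) :
    es.toFinset \ X = (es.filter (· ∉ X)).toFinset := by
  ext e; simp [List.mem_filter, and_comm]

lemma setCost_toFinset (es : List (Sym2 ℝ)) (h : es.Nodup) :
    setCost es.toFinset = (es.map edgeCost).sum :=
  List.sum_toFinset _ h

lemma sum_filter_split (es : List (Sym2 ℝ)) (X : Finset (Sym2 ℝ)) :
    ((es.filter (· ∈ X)).map edgeCost).sum + ((es.filter (· ∉ X)).map edgeCost).sum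
      = (es.map edgeCost).sum := by
  induction es with
  | nil => simp
  | cons e t ih => by_cases h : e ∈ X <;> simp [List.filter_cons, h, ← ih] <;> ring

/-- Let `l` be the line path (its vertices listed in increasing order), let
`X` be a matching contained in the edges of the line, and let `I` be a subinterval of the
line, i.e. a contiguous segment (infix) of its edge list.  Then there is an `X`-alternating
path `p` (in the complete graph on the points) with `c(edges of p ∩ X) = c(X ∩ I)` and
`c(edges of p \ X) = c(I \ X)`. -/
theorem stmt7 (l : List ℝ) (hl : l.Chain' (· < ·))
    (X : Finset (Sym2 ℝ)) (hXL : X ⊆ (edgeList l).toFinset)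
    (hmatch : ∀ e ∈ X, ∀ f ∈ X, e ≠ f → ∀ x : ℝ, x ∈ e → x ∉ f)
    (I : List (Sym2 ℝ)) (hI : I <:+: edgeList l) :
    ∃ p : List ℝ, p.Nodup ∧ IsAlt (↑X) (edgeList p) ∧
      setCost ((edgeList p).toFinset ∩ X) = setCost (I.toFinset ∩ X) ∧
      setCost ((edgeList p).toFinset \ X) = setCost (I.toFinset \ X) := by
  obtain ⟨m, hmI, rfl⟩ := exists_infix_of_infix_edgeList hI
  have hlP : l.Pairwise (· < ·) := List.isChain_iff_pairwise.mp hl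
  have hmch : m.Chain' (· < ·) := hl.sublist hmI.sublist
  cases m with
  | nil =>
    refine ⟨[], by simp, ?_, rfl, rfl⟩
    intro i hih
    simp [edgeList_nil] at hih
  | cons u rest =>
    have hQ : ∀ a b : ℝ, a ∈ u :: rest → b ∈ u :: rest → s(a, b) ∈ X →
        s(a, b) ∈ edgeList (u :: rest) := by
      intro a b ha hb hX'
      refine Q_infix hlP hmI (List.mem_toFinset.mp (hXL hX')) ?_
      intro z hz
      rcases Sym2.mem_iff.mp hz with rfl | rfl <;> assumption
    obtain ⟨hne, hhead, hlast, hchain, halt, -, hfilt⟩ :=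
      collapse_spec X hmatch rest u u hmch le_rfl hQ (Or.inl rfl)
    set p := collapse X u u rest with hp
    have hnodP : (edgeList p).Nodup := nodup_edgeList hchain
    have hnodI : (edgeList (u :: rest)).Nodup := nodup_edgeList hmch
    refine ⟨p, ?_, ?_, ?_, ?_⟩
    · exact (List.isChain_iff_pairwise.mp hchain).imp ne_of_lt
    · intro i hih
      have := List.isChain_iff_getElem.mp halt i (by omega)
      simpa using this
    · rw [toFinset_inter, toFinset_inter,
        setCost_toFinset _ (hnodP.filter _), setCost_toFinset _ (hnodI.filter _), hfilt]
    · rw [toFinset_sdiff, toFinset_sdiff,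
        setCost_toFinset _ (hnodP.filter _), setCost_toFinset _ (hnodI.filter _)]
      have h1 := sum_filter_split (edgeList p) X
      have h2 := sum_filter_split (edgeList (u :: rest)) X
      have h3 : ((edgeList p).filter (· ∈ X)).map edgeCost
          = ((edgeList (u :: rest)).filter (· ∈ X)).map edgeCost := by rw [hfilt]
      have h4 := sum_edgeCost hchain
      have h5 := sum_edgeCost hmch
      rw [hlast, hhead] at h4
      simp only [Option.getD_some, List.head?_cons] at h4 h5
      rw [h3] at h1
      linarith [h1, h2, h4, h5]
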